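/- Let m ≥ 1 and p ≥ 1 be integers, let d : Fin m → ℝ and let w : Fin m → Fin m → ℝ satisfy w i j = w j i and w i i = 0 for all i, j. Let A be the m×m real matrix with A i i = d i and A i j = −w i j for i ≠ j, and let A^p be the mp×mp real matrix indexed by pairs (i,k) with i ∈ Fin m, k ∈ Fin p, given blockwise by: the (i,i) diagonal block equals p·(d i)·I_p and the (i,j) off-diagonal block (i ≠ j) equals −(w i j)·J_p, where I_p is the p×p identity matrix and J_p the p×p all-ones matrix. Then the characteristic polynomial of (1/p)·A^p equals the characteristic polynomial of A multiplied by ∏_{i} (X − d i)^{p−1}; equivalently, the spectrum of (1/p)·A^p consists of the spectrum of A together with the diagonal entries d i of A, each repeated p − 1 times. -/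

import Mathlib

open Polynomial Matrix Finset Kronecker

lemma aux_charpoly_conj {R : Type*} [CommRing R] {n : Type*} [Fintype n] [DecidableEq n]
    (M P Q : Matrix n n R) (hQP : Q * P = 1) :
    (Q * M * P).charpoly = M.charpoly := by
  have hmap : (Q.map (C : R → R[X])) * (P.map C) = 1 := by
    rw [← Matrix.map_mul, hQP]
    simp
  have key : charmatrix (Q * M * P) = Q.map C * charmatrix M * P.map C := by
    rw [charmatrix, charmatrix, RingHom.mapMatrix_apply, RingHom.mapMatrix_apply,
      Matrix.mul_sub, Matrix.sub_mul]
    congr 1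
    · have h1 : Q.map (C : R → R[X]) * Matrix.scalar n (X : R[X])
          = Matrix.scalar n (X : R[X]) * Q.map C :=
        (scalar_commute _ (fun r => Commute.all _ r) _).symm
    
      rw [h1, Matrix.mul_assoc, hmap, Matrix.mul_one]
    · rw [← Matrix.map_mul, ← Matrix.map_mul]
  have hdet : (Q.map (C : R → R[X])).det * (P.map C).det = 1 := by
    rw [← Matrix.det_mul, hmap, Matrix.det_one]
  rw [Matrix.charpoly, Matrix.charpoly, key, Matrix.det_mul, Matrix.det_mul,
    mul_right_comm, hdet, one_mul]

lemma aux_charpoly_diagonal {R : Type*} [CommRing R] {n : Type*} [Fintype n] [DecidableEq n]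
    (v : n → R) : (Matrix.diagonal v).charpoly = ∏ i, (X - C (v i)) := by
  have : charmatrix (Matrix.diagonal v) = Matrix.diagonal (fun i => (X : R[X]) - C (v i)) := by
    ext i j
    by_cases h : i = j <;> simp [h, charmatrix_apply, Matrix.diagonal_apply]
  rw [Matrix.charpoly, this, Matrix.det_diagonal]

theorem block_laplacian_charpoly (m p : ℕ) (hm : 1 ≤ m) (hp : 1 ≤ p)
    (d : Fin m → ℝ) (w : Fin m → Fin m → ℝ)
    (hsymm : ∀ i j, w i j = w j i) (hdiag : ∀ i, w i i = 0) :
    Matrix.charpoly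
        ((1 / (p : ℝ)) •
          (Matrix.of fun x y : Fin m × Fin p =>
            if x.1 = y.1 then (if x.2 = y.2 then (p : ℝ) * d x.1 else 0)
            else -w x.1 y.1))
      = Matrix.charpoly (Matrix.of fun i j : Fin m => if i = j then d i else -w i j)
          * ∏ i : Fin m, (X - C (d i)) ^ (p - 1) := by
  obtain ⟨q, rfl⟩ : ∃ q, p = q + 1 := ⟨p - 1, (Nat.succ_pred_eq_of_pos hp).symm⟩
  set A : Matrix (Fin m) (Fin m) ℝ :=
    Matrix.of fun i j => if i = j then d i else -w i j with hA
  rcases Nat.eq_zero_or_pos q with hq | hq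
  · -- p = 1 case
    subst hq
    let e : Fin m × Fin 1 ≃ Fin m :=
      ⟨fun x => x.1, fun i => (i, 0), fun x => by
        obtain ⟨i, k⟩ := x
        simp [Subsingleton.elim k 0], fun i => rfl⟩
    rw [← Matrix.charpoly_reindex e]
    have hre : Matrix.reindex e e
        ((1 / ((0 + 1 : ℕ) : ℝ)) •
          (Matrix.of fun x y : Fin m × Fin 1 =>
            if x.1 = y.1 then (if x.2 = y.2 then ((0 + 1 : ℕ) : ℝ) * d x.1 else 0)
            else -w x.1 y.1)) = A := by
      ext i j
      by_cases h : i = j <;>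
        simp [Matrix.reindex_apply, Matrix.submatrix_apply, h, hA, Subsingleton.elim
          ((e.symm i).2) ((e.symm j).2), e, Equiv.prodUnique]
    rw [hre]
    simp
  · -- p = q + 1, q ≥ 1
    set c : ℝ := ((q : ℝ) + 1)⁻¹ with hcdef
    have hc : ((q : ℝ) + 1) ≠ 0 := by positivity
    set N : Matrix (Fin (q+1)) (Fin (q+1)) ℝ :=
      Matrix.of fun k l => if l = 0 ∧ k ≠ 0 then 1 else 0 with hN
    have hN2 : N * N = 0 := by
      ext k l
      simp only [Matrix.mul_apply, Matrix.zero_apply]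
      apply Finset.sum_eq_zero
      intro a _
      by_cases h : a = 0 <;> simp [hN, h]
    have hST : (1 + N) * (1 - N) = 1 := by
      rw [add_mul, one_mul, mul_sub, mul_one, hN2, sub_zero, sub_add_cancel]
    set K : Matrix (Fin (q+1)) (Fin (q+1)) ℝ := Matrix.of fun _ _ => c with hK
    set Mk : Matrix (Fin (q+1)) (Fin (q+1)) ℝ :=
      Matrix.of fun k l => if k = 0 then (if l = 0 then 1 else c) else 0 with hMk
    -- (1+N) * Mk = all rows equal to row 0 of Mk
    have hX1 : (1 + N) * Mk = Matrix.of fun _ l => if l = 0 then 1 else c := by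
      ext k l
      simp only [Matrix.mul_apply, Matrix.add_apply, Matrix.one_apply, Matrix.of_apply,
        hN, hMk, add_mul]
      rw [Finset.sum_add_distrib]
      by_cases h : k = 0
      · simp [h, Finset.sum_ite_eq, Finset.sum_ite_eq']
      · simp [h, Finset.sum_ite_eq, Finset.sum_ite_eq']
    have hcount : (Finset.univ.filter fun a : Fin (q+1) => a ≠ 0).card = q := by
      rw [Finset.filter_ne', Finset.card_erase_of_mem (Finset.mem_univ _),
        Finset.card_univ, Fintype.card_fin]
      omega
    have hX2 : (Matrix.of fun _ l : Fin (q+1) => if l = 0 then (1:ℝ) else c) * (1 - N) = K := by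
      ext k l
      simp only [Matrix.mul_apply, Matrix.sub_apply, Matrix.one_apply, Matrix.of_apply, hN, hK]
      by_cases h : l = 0
      · subst h
        have : ∀ a : Fin (q+1),
            (if a = 0 then (1:ℝ) else c) * ((if a = (0:Fin (q+1)) then 1 else 0) -
              (if (0:Fin (q+1)) = 0 ∧ a ≠ 0 then 1 else 0))
            = (if a = 0 then (1:ℝ) else 0) + (if a ≠ 0 then -c else 0) := by
          intro a
          by_cases ha : a = 0 <;> simp [ha]
        rw [Finset.sum_congr rfl (fun a _ => this a), Finset.sum_add_distrib,
          Finset.sum_ite_eq' Finset.univ (0 : Fin (q+1)) (fun _ => (1:ℝ)),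
          ← Finset.sum_filter, Finset.sum_const, hcount]
        simp only [Finset.mem_univ, if_true, nsmul_eq_mul]
        have hc' : (1:ℝ) + (q:ℝ) ≠ 0 := by positivity
        rw [hcdef]
        field_simp
        ring
      · have : ∀ a : Fin (q+1),
            (if a = 0 then (1:ℝ) else c) * ((if a = l then 1 else 0) -
              (if l = 0 ∧ a ≠ 0 then 1 else 0))
            = if a = l then c else 0 := by
          intro a
          by_cases ha : a = l
          · subst ha
            simp [h]
          · simp [ha, h]
        rw [Finset.sum_congr rfl (fun a _ => this a)]
        simp
    have hKey : (1 + N) * Mk * (1 - N) = K := by rw [hX1, hX2]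
    have hKey2 : (1 + N) * (1 - Mk) * (1 - N) = 1 - K := by
      have expand : (1 + N) * (1 - Mk) * (1 - N)
          = (1 + N) * (1 - N) - (1 + N) * Mk * (1 - N) := by noncomm_ring
      rw [expand, hST, hKey]
    set D' : Matrix (Fin m) (Fin m) ℝ := Matrix.diagonal d with hD
    set Cmat : Matrix (Fin m × Fin (q+1)) (Fin m × Fin (q+1)) ℝ :=
      A ⊗ₖ Mk + D' ⊗ₖ (1 - Mk) with hCmat
    set Pm : Matrix (Fin m × Fin (q+1)) (Fin m × Fin (q+1)) ℝ := 1 ⊗ₖ (1 + N) with hPm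
    set Qm : Matrix (Fin m × Fin (q+1)) (Fin m × Fin (q+1)) ℝ := 1 ⊗ₖ (1 - N) with hQm
    have hPQ : Pm * Qm = 1 := by
      rw [hPm, hQm, ← mul_kronecker_mul, hST, Matrix.one_mul, one_kronecker_one]
    have hPCQ : Pm * Cmat * Qm = A ⊗ₖ K + D' ⊗ₖ (1 - K) := by
      rw [hPm, hQm, hCmat, Matrix.mul_add, Matrix.add_mul, ← mul_kronecker_mul,
        ← mul_kronecker_mul, ← mul_kronecker_mul, ← mul_kronecker_mul,
        Matrix.one_mul, Matrix.one_mul, Matrix.mul_one, Matrix.mul_one, hKey, hKey2]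
    have hBB : ((1 / (((q+1 : ℕ)) : ℝ)) •
          (Matrix.of fun x y : Fin m × Fin (q+1) =>
            if x.1 = y.1 then (if x.2 = y.2 then (((q+1:ℕ)) : ℝ) * d x.1 else 0)
            else -w x.1 y.1)) = A ⊗ₖ K + D' ⊗ₖ (1 - K) := by
      ext x y
      obtain ⟨i, k⟩ := x
      obtain ⟨j, l⟩ := y
      simp only [Matrix.smul_apply, Matrix.of_apply, Matrix.add_apply, kroneckerMap_apply,
        Matrix.sub_apply, Matrix.one_apply, hA, hK, hD, Matrix.diagonal_apply, smul_eq_mul]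
      push_cast
      by_cases hij : i = j
      · subst hij
        by_cases hkl : k = l <;> simp [hkl, hcdef] <;> try field_simp
        all_goals try ring
      · simp [hij, hcdef]
        all_goals try field_simp
        all_goals try ring
    have hconj : Matrix.charpoly ((1 / (((q+1:ℕ)) : ℝ)) •
          (Matrix.of fun x y : Fin m × Fin (q+1) =>
            if x.1 = y.1 then (if x.2 = y.2 then (((q+1:ℕ)) : ℝ) * d x.1 else 0)
            else -w x.1 y.1)) = Cmat.charpoly := by
      rw [hBB, ← hPCQ]
      exact aux_charpoly_conj Cmat Qm Pm hPQ
    rw [hconj]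
    -- block triangular structure
    set b : Fin m × Fin (q+1) → Bool := fun x => decide (x.2 ≠ 0) with hb
    have hBT : Cmat.BlockTriangular b := by
      intro x y hxy
      have hx : x.2 ≠ 0 := by
        by_contra h
        simp [hb, h, Bool.lt_iff] at hxy
      have hy : y.2 = 0 := by
        by_contra h
        simp [hb, h, Bool.lt_iff] at hxy
      simp [hCmat, kroneckerMap_apply, hMk, hx, hy, Ne.symm hx]
    have himg : Finset.univ.image b = Finset.univ := by
      apply Finset.eq_univ_iff_forall.2
      intro bo
      rcases bo with _ | _
      · exact Finset.mem_image.2 ⟨(⟨0, hm⟩, 0), Finset.mem_univ _, by simp [hb]⟩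
      · refine Finset.mem_image.2 ⟨(⟨0, hm⟩, ⟨1, by omega⟩), Finset.mem_univ _, ?_⟩
        simp [hb]
    rw [hBT.charpoly, himg, Fintype.prod_bool]
    -- the false block is A
    let efalse : Fin m ≃ {x : Fin m × Fin (q+1) // b x = false} :=
      { toFun := fun i => ⟨(i, 0), by simp [hb]⟩
        invFun := fun x => x.1.1
        left_inv := fun i => rfl
        right_inv := fun x => by
          obtain ⟨⟨i, k⟩, hx⟩ := x
          have : k = 0 := by simpa [hb] using hx
          subst this
          rfl }
    have hfalse : Cmat.toSquareBlock b false = Matrix.reindex efalse efalse A := by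
      ext x y
      have hx : x.1.2 = 0 := by simpa [hb] using x.2
      have hy : y.1.2 = 0 := by simpa [hb] using y.2
      simp [Matrix.toSquareBlock_def, Matrix.reindex_apply, Matrix.submatrix_apply,
        hCmat, kroneckerMap_apply, hMk, hx, hy, hD, Matrix.diagonal_apply, efalse,
        Matrix.one_apply]
    have htrue : Cmat.toSquareBlock b true
        = Matrix.diagonal (fun x : {x : Fin m × Fin (q+1) // b x = true} => d x.1.1) := by
      ext x y
      have hx : x.1.2 ≠ 0 := by simpa [hb] using x.2
      have hy : y.1.2 ≠ 0 := by simpa [hb] using y.2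
      by_cases hxy : x = y
      · subst hxy
        simp [Matrix.toSquareBlock_def, hCmat, kroneckerMap_apply, hMk, hx, hD,
          Matrix.diagonal_apply]
      · have hxy' : x.1 ≠ y.1 := fun h => hxy (Subtype.ext h)
        rw [Matrix.diagonal_apply_ne _ hxy]
        by_cases h1 : x.1.1 = y.1.1
        · have h2 : x.1.2 ≠ y.1.2 := by
            intro h2
            exact hxy' (Prod.ext h1 h2)
          simp [Matrix.toSquareBlock_def, hCmat, kroneckerMap_apply, hMk, hx, hD,
            Matrix.diagonal_apply, h1, h2]
        · simp [Matrix.toSquareBlock_def, hCmat, kroneckerMap_apply, hMk, hx, hD,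
            Matrix.diagonal_apply, h1]
    rw [hfalse, Matrix.charpoly_reindex, htrue, aux_charpoly_diagonal, mul_comm]
    congr 1
    -- compute the product over the subtype
    rw [← Finset.prod_subtype (Finset.univ.filter fun x : Fin m × Fin (q+1) => b x = true)
      (fun x => by simp) (fun x => X - C (d x.1))]
    rw [Finset.prod_filter]
    rw [Fintype.prod_prod_type]
    have : ∀ i : Fin m, (∏ k : Fin (q+1), if b (i, k) = true then (X - C (d i)) else 1)
        = (X - C (d i)) ^ (q + 1 - 1) := by
      intro i
      rw [← Finset.prod_filter, Finset.prod_const]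
      congr 1
      rw [show (Finset.univ.filter fun k : Fin (q+1) => b (i, k) = true)
          = Finset.univ.filter fun k : Fin (q+1) => k ≠ 0 by
        apply Finset.filter_congr
        intro k _
        simp [hb]]
      rw [hcount]
      omega
    exact Finset.prod_congr rfl fun i _ => this i
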